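/- Let λ* = (λ₁*,…,λ₆*) ∈ ℝ⁶ satisfy λ₁* = λ₄* = λ₅* = 0, λ₃* = λ₆*, and λ₂* ≠ 0 (i.e. λ* is a smooth point of the intersection I₁ ∩ I₃, not on I₂). Then the ideal of ℝ[λ₁,…,λ₆] generated by the Kapteyn–Bautin polynomials v₁, v₂, v₃, v₄ and the ideal generated by λ₁, λ₅(λ₃−λ₆), λ₄²(λ₃−λ₆), λ₄(λ₃−λ₆)² coincide locally at λ*. -/

import Mathlib

open MvPolynomial

/-- The multiplicative set of polynomials not vanishing at `p`, i.e. the complement of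
the maximal ideal of polynomials vanishing at `p`. -/
def nonVanishing (K : Type*) [Field K] (p : Fin 6 → K) :
    Submonoid (MvPolynomial (Fin 6) K) where
  carrier := {f | eval p f ≠ 0}
  mul_mem' := by
    intro a b ha hb
    simp only [Set.mem_setOf_eq, map_mul] at ha hb ⊢
    exact mul_ne_zero ha hb
  one_mem' := by simp

/-- Two ideals of `K[λ₁,…,λ₆]` coincide locally at `p` if their extensions to the
localization of the polynomial ring at the maximal ideal of polynomials vanishing at `p`
(equivalently, the localization inverting all polynomials not vanishing at `p`) are equal. -/
def coincideLocally (K : Type*) [Field K] (p : Fin 6 → K)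
    (I J : Ideal (MvPolynomial (Fin 6) K)) : Prop :=
  Ideal.map (algebraMap (MvPolynomial (Fin 6) K) (Localization (nonVanishing K p))) I =
  Ideal.map (algebraMap (MvPolynomial (Fin 6) K) (Localization (nonVanishing K p))) J

/-- The Bautin ideal of the Kapteyn normal form, generated by the Kapteyn–Bautin
polynomials `v₁ = λ₁`, `v₂ = λ₅(λ₃−λ₆)`, `v₃ = λ₂λ₄(λ₃−λ₆)(λ₄+5λ₃−5λ₆)`,
`v₄ = λ₂λ₄(λ₃−λ₆)²(λ₃λ₆−2λ₆²−λ₂²)`, where `X 0 = λ₁, …, X 5 = λ₆`. -/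
noncomputable def bautinIdeal (K : Type*) [Field K] : Ideal (MvPolynomial (Fin 6) K) :=
  Ideal.span {X 0, X 4 * (X 2 - X 5),
    X 1 * X 3 * (X 2 - X 5) * (X 3 + 5 * X 2 - 5 * X 5),
    X 1 * X 3 * (X 2 - X 5) ^ 2 * (X 2 * X 5 - 2 * X 5 ^ 2 - X 1 ^ 2)}

/-- at a smooth point `λ*` of `I₁ ∩ I₃` not on `I₂`
(`λ₁* = λ₄* = λ₅* = 0`, `λ₃* = λ₆*`, `λ₂* ≠ 0`, base field `ℝ`), the Bautin ideal
coincides locally at `λ*` with the ideal `(λ₁, λ₅(λ₃−λ₆), λ₄²(λ₃−λ₆), λ₄(λ₃−λ₆)²)`. -/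
theorem stmt_8 (l1 l2 l3 l4 l5 l6 : ℝ)
    (h1 : l1 = 0) (h4 : l4 = 0) (h5 : l5 = 0)
    (h36 : l3 = l6) (h2 : l2 ≠ 0) :
    coincideLocally ℝ ![l1, l2, l3, l4, l5, l6]
      (bautinIdeal ℝ)
      (Ideal.span {X 0, X 4 * (X 2 - X 5), X 3 ^ 2 * (X 2 - X 5),
        X 3 * (X 2 - X 5) ^ 2}) := by
  subst h1 h4 h5 h36
  classical
  set p : Fin 6 → ℝ := ![0, l2, l3, 0, 0, l3] with hp
  set R := MvPolynomial (Fin 6) ℝ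
  set L := Localization (nonVanishing ℝ p)
  set φ := algebraMap R L with hφ
  set t : R := X 2 - X 5 with ht
  set w : R := X 2 * X 5 - 2 * X 5 ^ 2 - X 1 ^ 2 with hw
  have hJsub : bautinIdeal ℝ ≤ Ideal.span {(X 0 : R), X 4 * (X 2 - X 5),
      X 3 ^ 2 * (X 2 - X 5), X 3 * (X 2 - X 5) ^ 2} := by
    rw [bautinIdeal, Ideal.span_le]
    intro f hf
    simp only [Set.mem_insert_iff, Set.mem_singleton_iff] at hf
    rcases hf with rfl | rfl | rfl | rfl
    · exact Ideal.subset_span (by simp)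
    · exact Ideal.subset_span (by simp)
    · have : (X 1 * X 3 * (X 2 - X 5) * (X 3 + 5 * X 2 - 5 * X 5) : R)
          = X 1 * (X 3 ^ 2 * (X 2 - X 5)) + (5 * X 1) * (X 3 * (X 2 - X 5) ^ 2) := by ring
      rw [this]
      exact Ideal.add_mem _
        (Ideal.mul_mem_left _ _ (Ideal.subset_span (by simp)))
        (Ideal.mul_mem_left _ _ (Ideal.subset_span (by simp)))
    · have : (X 1 * X 3 * (X 2 - X 5) ^ 2 * (X 2 * X 5 - 2 * X 5 ^ 2 - X 1 ^ 2) : R)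
          = (X 1 * (X 2 * X 5 - 2 * X 5 ^ 2 - X 1 ^ 2)) * (X 3 * (X 2 - X 5) ^ 2) := by ring
      rw [this]
      exact Ideal.mul_mem_left _ _ (Ideal.subset_span (by simp))
  refine le_antisymm (Ideal.map_mono hJsub) ?_
  have hX1 : (X 1 : R) ∈ nonVanishing ℝ p := by
    show eval p (X 1 : R) ≠ 0
    simp [hp, h2]
  have hwmem : (X 1 * w : R) ∈ nonVanishing ℝ p := by
    show eval p (X 1 * w : R) ≠ 0
    simp only [hw, hp, map_mul, map_sub, map_pow, eval_X, map_ofNat]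
    simp only [Matrix.cons_val_one, Matrix.cons_val_two, Matrix.cons_val_succ,
      Matrix.cons_val_zero, Matrix.head_cons, Matrix.tail_cons]
    have hpos : l2 ^ 2 > 0 := by positivity
    have : l3 * l3 - 2 * l3 ^ 2 - l2 ^ 2 < 0 := by nlinarith [sq_nonneg l3]
    exact mul_ne_zero h2 (ne_of_lt this)
  have huX1 : IsUnit (φ (X 1)) := IsLocalization.map_units L ⟨X 1, hX1⟩
  have huw : IsUnit (φ (X 1 * w)) := IsLocalization.map_units L ⟨_, hwmem⟩
  have huX1inv : (↑huX1.unit⁻¹ : L) * φ (X 1) = 1 := huX1.val_inv_mul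
  have huwinv : (↑huw.unit⁻¹ : L) * φ (X 1 * w) = 1 := huw.val_inv_mul
  have hv4mem : φ (X 1 * X 3 * t ^ 2 * w) ∈ Ideal.map φ (bautinIdeal ℝ) :=
    Ideal.mem_map_of_mem _ (Ideal.subset_span (by simp [ht, hw]))
  have hv3mem : φ (X 1 * X 3 * t * (X 3 + 5 * X 2 - 5 * X 5)) ∈ Ideal.map φ (bautinIdeal ℝ) :=
    Ideal.mem_map_of_mem _ (Ideal.subset_span (by simp [ht]))
  have hA : φ (X 3 * t ^ 2) ∈ Ideal.map φ (bautinIdeal ℝ) := by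
    have heq : φ (X 1 * X 3 * t ^ 2 * w) = φ (X 1 * w) * φ (X 3 * t ^ 2) := by
      rw [← map_mul]; congr 1; ring
    have key : φ (X 3 * t ^ 2) = ↑huw.unit⁻¹ * φ (X 1 * X 3 * t ^ 2 * w) := by
      rw [heq, ← mul_assoc, huwinv, one_mul]
    rw [key]
    exact Ideal.mul_mem_left _ _ hv4mem
  have hB : φ (X 3 ^ 2 * t) ∈ Ideal.map φ (bautinIdeal ℝ) := by
    have heq : φ (X 1 * X 3 * t * (X 3 + 5 * X 2 - 5 * X 5))
        = φ (X 1) * (φ (X 3 ^ 2 * t) + 5 * φ (X 3 * t ^ 2)) := by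
      rw [← show φ 5 = 5 from map_ofNat φ 5, ← map_mul, ← map_add, ← map_mul]
      congr 1
      rw [ht]; ring
    have key : φ (X 3 ^ 2 * t) = ↑huX1.unit⁻¹ * φ (X 1 * X 3 * t * (X 3 + 5 * X 2 - 5 * X 5))
        - 5 * φ (X 3 * t ^ 2) := by
      rw [heq, ← mul_assoc, huX1inv, one_mul]
      ring
    rw [key]
    exact Ideal.sub_mem _ (Ideal.mul_mem_left _ _ hv3mem) (Ideal.mul_mem_left _ _ hA)
  refine Ideal.map_le_iff_le_comap.mpr ?_
  rw [Ideal.span_le]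
  intro f hf
  simp only [Set.mem_insert_iff, Set.mem_singleton_iff] at hf
  rw [SetLike.mem_coe, Ideal.mem_comap]
  rcases hf with rfl | rfl | rfl | rfl
  · exact Ideal.mem_map_of_mem _ (Ideal.subset_span (by simp [bautinIdeal]))
  · exact Ideal.mem_map_of_mem _ (Ideal.subset_span (by simp [bautinIdeal, ht]))
  · exact hB
  · exact hA
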